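/- Let A be a connected graph with at least one cycle. Then the family Q_A = { X ⊆ E(A) : A⟨X⟩ has no leaves } has a unique maximum element under inclusion, this maximum element equals the minimum element of R_A = { X ⊆ E(A) : X ≠ ∅, Δ(A⟨X⟩) = Δ(A) }, and every cycle of A is a subgraph of the induced subgraph on this edge set (the kernel ⌊A⌋). -/

import Mathlib

open scoped Classical

/-- A finite multigraph: loops and parallel edges allowed. -/
structure Multigraph where
  V : Type
  E : Type
  [fintypeV : Fintype V]
  [fintypeE : Fintype E]
  ends : E → Sym2 V

attribute [instance] Multigraph.fintypeV Multigraph.fintypeE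

namespace Multigraph

variable (G : Multigraph)

/-- Vertex support of an edge set: vertices incident to some edge of `X`. -/
noncomputable def supp (X : Finset G.E) : Finset G.V :=
  Finset.univ.filter (fun v => ∃ e ∈ X, v ∈ G.ends e)

/-- `Δ` of the subgraph induced by the edge set `X`. -/
noncomputable def delta (X : Finset G.E) : ℤ := (X.card : ℤ) - (G.supp X).card

/-- `Δ(G) = |E(G)| - |V(G)|`. -/
noncomputable def deltaG : ℤ := (Fintype.card G.E : ℤ) - (Fintype.card G.V : ℤ)

/-- Degree of `v` in the edge set `X`: loops count twice. -/
noncomputable def degIn (X : Finset G.E) (v : G.V) : ℕ :=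
  ∑ e ∈ X, (if G.ends e = s(v, v) then 2 else if v ∈ G.ends e then 1 else 0)

/-- `u` and `v` are joined by an edge of `X`. -/
def adjIn (X : Finset G.E) (u v : G.V) : Prop := ∃ e ∈ X, G.ends e = s(u, v)

/-- Reachability using only edges of `X`. -/
def reachIn (X : Finset G.E) : G.V → G.V → Prop :=
  Relation.ReflTransGen (G.adjIn X)

/-- The edge set `X` induces a connected subgraph. -/
def ConnSet (X : Finset G.E) : Prop :=
  X.Nonempty ∧ ∀ u ∈ G.supp X, ∀ v ∈ G.supp X, G.reachIn X u v

/-- Edges of the component of the subgraph `(V, X)` containing vertex `v`. -/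
noncomputable def compEdges (X : Finset G.E) (v : G.V) : Finset G.E :=
  X.filter (fun f => ∃ u ∈ G.ends f, G.reachIn X v u)

/-- Vertices of the component of `v` in the graph `(V, X)` (all vertices kept). -/
noncomputable def compVerts (X : Finset G.E) (v : G.V) : Finset G.V :=
  Finset.univ.filter (fun u => G.reachIn X v u)

/-- `C` is (the edge set of) a cycle: connected, every vertex of degree 2. -/
def IsCycleSet (C : Finset G.E) : Prop :=
  G.ConnSet C ∧ ∀ v ∈ G.supp C, G.degIn C v = 2

/-- `T` induces a tree. -/
def IsTreeSet (T : Finset G.E) : Prop := G.ConnSet T ∧ G.delta T = -1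

/-- The component of `v` in `(V, X)` is a tree (possibly a single vertex). -/
def IsTreeCompAt (X : Finset G.E) (v : G.V) : Prop :=
  (G.compEdges X v).card + 1 = (G.compVerts X v).card

/-- The number of tree components of the graph `(V, X)`. -/
noncomputable def treeCount (X : Finset G.E) : ℕ :=
  (((Finset.univ : Finset G.V).filter (fun v => G.IsTreeCompAt X v)).image
    (fun v => G.compVerts X v)).card

/-- The graph `G` has no isolated vertices. -/
def NoIso : Prop := ∀ v : G.V, ∃ e : G.E, v ∈ G.ends e

/-- The graph `G` has no leaves. -/
def NoLeaf : Prop := ∀ v : G.V, G.degIn Finset.univ v ≠ 1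

/-- The graph `G` is connected. -/
def GConn : Prop := Nonempty G.V ∧ ∀ u v : G.V, G.reachIn Finset.univ u v

/-- `G` is a bicycle: connected, leafless, with `Δ(G) = 1`. -/
def IsBicycle : Prop := G.GConn ∧ G.NoLeaf ∧ G.deltaG = 1

/-- One round of deleting all edges incident to a leaf. -/
noncomputable def pruneStep (X : Finset G.E) : Finset G.E :=
  X.filter (fun e => ∀ v ∈ G.ends e, G.degIn X v ≠ 1)

/-- Edge set obtained from `G` by repeatedly deleting leaves until none remain. -/
noncomputable def kernelSet : Finset G.E :=
  G.pruneStep^[Fintype.card G.E] Finset.univ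

/-- `Δ` of the component of `G` containing `v`. -/
noncomputable def compDelta (v : G.V) : ℤ :=
  ((G.compEdges Finset.univ v).card : ℤ) - ((G.compVerts Finset.univ v).card : ℤ)

/-- The core `[G]`: union of the kernels of the components `A` with `Δ(A) ≥ 1`. -/
noncomputable def coreSet : Finset G.E :=
  G.kernelSet.filter (fun e => ∀ v ∈ G.ends e, 1 ≤ G.compDelta v)

/-- `P` is the edge set of an `(x,y)`-path. -/
def IsPathSet (P : Finset G.E) (x y : G.V) : Prop :=
  G.ConnSet P ∧ x ≠ y ∧ x ∈ G.supp P ∧ y ∈ G.supp P ∧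
  G.degIn P x = 1 ∧ G.degIn P y = 1 ∧
  ∀ v ∈ G.supp P, v ≠ x → v ≠ y → G.degIn P v = 2

/-- `C` induces a bicycle subgraph: connected, leafless, `Δ = 1`. -/
def IsBicycleSet (C : Finset G.E) : Prop :=
  G.ConnSet C ∧ (∀ v ∈ G.supp C, G.degIn C v ≠ 1) ∧ G.delta C = 1

/-- Circuits of the `k`-circular matroid `M_k(G)`: minimal nonempty edge sets `C`
with `|C| = |V(G⟨C⟩)| + k`, i.e. `Δ(G⟨C⟩) = k`. -/
def IsCircuitSet (k : ℕ) (C : Finset G.E) : Prop :=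
  (C.Nonempty ∧ G.delta C = (k : ℤ)) ∧
  ∀ D ⊂ C, ¬ (D.Nonempty ∧ G.delta D = (k : ℤ))

/-- Independent sets of `M_k(G)`. -/
def Indep (k : ℕ) (I : Finset G.E) : Prop := ∀ C ⊆ I, ¬ G.IsCircuitSet k C

/-- Bases of `M_k(G)`: maximal independent sets. -/
def IsBase (k : ℕ) (B : Finset G.E) : Prop :=
  G.Indep k B ∧ ∀ B' : Finset G.E, G.Indep k B' → B ⊆ B' → B' = B

/-- The matroid `M_k(G)` is connected: at least two elements and every two
elements lie on a common circuit. -/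
def MConn (k : ℕ) : Prop :=
  2 ≤ Fintype.card G.E ∧
  ∀ a b : G.E, ∃ C : Finset G.E, G.IsCircuitSet k C ∧ a ∈ C ∧ b ∈ C

end Multigraph
namespace Multigraph

variable (G : Multigraph)

/-- contribution of edge `e` to the degree of `v`. -/
noncomputable def ctb (e : G.E) (v : G.V) : ℕ :=
  if G.ends e = s(v, v) then 2 else if v ∈ G.ends e then 1 else 0

lemma degIn_eq_sum_ctb (X : Finset G.E) (v : G.V) :
    G.degIn X v = ∑ e ∈ X, G.ctb e v := rfl

variable {G}

lemma mem_supp_iff {X : Finset G.E} {v : G.V} :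
    v ∈ G.supp X ↔ ∃ e ∈ X, v ∈ G.ends e := by
  simp [Multigraph.supp]

lemma endpoint_mem_supp {X : Finset G.E} {e : G.E} {v : G.V}
    (he : e ∈ X) (hv : v ∈ G.ends e) : v ∈ G.supp X :=
  mem_supp_iff.2 ⟨e, he, hv⟩

lemma supp_mono {X Y : Finset G.E} (h : X ⊆ Y) : G.supp X ⊆ G.supp Y := by
  intro v hv
  obtain ⟨e, he, hve⟩ := mem_supp_iff.1 hv
  exact endpoint_mem_supp (h he) hve

lemma supp_nonempty {X : Finset G.E} (h : X.Nonempty) : (G.supp X).Nonempty := by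
  obtain ⟨e, he⟩ := h
  obtain ⟨⟨a, b⟩, hab⟩ := Quot.exists_rep (G.ends e)
  exact ⟨a, endpoint_mem_supp he (by rw [← hab]; exact Sym2.mem_mk_left a b)⟩

lemma ctb_eq {e : G.E} {a b : G.V} (h : G.ends e = s(a, b)) (v : G.V) :
    G.ctb e v = (if v = a then 1 else 0) + (if v = b then 1 else 0) := by
  unfold ctb
  rw [h]
  simp only [Sym2.eq_iff, Sym2.mem_iff]
  split_ifs <;> simp_all <;> omega

lemma ctb_le_two (e : G.E) (v : G.V) : G.ctb e v ≤ 2 := by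
  unfold ctb; split <;> [omega; (split <;> omega)]

lemma mem_ends_of_ctb_ne_zero {e : G.E} {v : G.V} (h : G.ctb e v ≠ 0) :
    v ∈ G.ends e := by
  unfold ctb at h
  split at h
  · next hl => rw [hl]; exact Sym2.mem_mk_left v v
  · split at h
    · assumption
    · omega

lemma one_le_ctb {e : G.E} {v : G.V} (h : v ∈ G.ends e) : 1 ≤ G.ctb e v := by
  unfold ctb
  split_ifs with h1 h2 <;> first | omega | exact absurd h h2

lemma degIn_mono {X Y : Finset G.E} (h : X ⊆ Y) (v : G.V) :
    G.degIn X v ≤ G.degIn Y v :=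
  Finset.sum_le_sum_of_subset h

lemma one_le_degIn {X : Finset G.E} {v : G.V} (h : v ∈ G.supp X) :
    1 ≤ G.degIn X v := by
  obtain ⟨e, he, hve⟩ := mem_supp_iff.1 h
  calc 1 ≤ G.ctb e v := one_le_ctb hve
    _ ≤ _ := Finset.single_le_sum (f := fun e => G.ctb e v) (fun i _ => Nat.zero_le _) he

lemma reach_eq_or_mem_supp {X : Finset G.E} {u w : G.V}
    (h : G.reachIn X u w) : u = w ∨ w ∈ G.supp X := by
  induction h with
  | refl => exact Or.inl rfl
  | tail _ h2 _ =>
      obtain ⟨e, he, hends⟩ := h2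
      exact Or.inr (endpoint_mem_supp he (by rw [hends]; exact Sym2.mem_mk_right _ _))

/-- crossing lemma: reachability from `supp X` inside `X ∪ W` stays in `supp X`
when the two supports are disjoint. -/
lemma reach_stays {X W : Finset G.E}
    (hd : ∀ v, v ∈ G.supp X → v ∈ G.supp W → False) {u p : G.V}
    (hu : u ∈ G.supp X) (h : G.reachIn (X ∪ W) u p) : p ∈ G.supp X := by
  induction h with
  | refl => exact hu
  | tail _ h2 ih =>
      obtain ⟨e, he, hends⟩ := h2
      rcases Finset.mem_union.1 he with he' | he'
      · exact endpoint_mem_supp he' (by rw [hends]; exact Sym2.mem_mk_right _ _)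
      · exact absurd (endpoint_mem_supp he' (by rw [hends]; exact Sym2.mem_mk_left _ _))
          (fun hm => hd _ ih hm)

/-- retraction lemma: adding an edge to a fresh vertex `b` doesn't create new
reachability among old vertices. -/
lemma reach_retract {Z : Finset G.E} {f : G.E} {a b : G.V}
    (hf : G.ends f = s(a, b)) (hb : b ∉ G.supp Z) {p q : G.V}
    (h : G.reachIn (insert f Z) p q) :
    G.reachIn Z (if p = b then a else p) (if q = b then a else q) := by
  induction h with
  | refl => exact Relation.ReflTransGen.refl
  | tail _ h2 ih =>
      obtain ⟨e, he, hends⟩ := h2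
      rcases Finset.mem_insert.1 he with he' | he'
      · -- e = f
        subst he'
        rw [hf] at hends
        have hra : (if a = b then a else a) = a := by split <;> rfl
        rcases Sym2.eq_iff.1 hends with ⟨h1, h2⟩ | ⟨h1, h2⟩
        · subst h1; subst h2
          simpa [hra] using ih
        · subst h1; subst h2
          simpa [hra] using ih
      · -- e ∈ Z
        rename_i m q' _
        have hm : m ∈ G.supp Z :=
          endpoint_mem_supp he' (by rw [hends]; exact Sym2.mem_mk_left _ _)
        have hq : q' ∈ G.supp Z :=
          endpoint_mem_supp he' (by rw [hends]; exact Sym2.mem_mk_right _ _)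
        have hmb : m ≠ b := fun h => hb (h ▸ hm)
        have hqb : q' ≠ b := fun h => hb (h ▸ hq)
        rw [if_neg hmb] at ih
        rw [if_neg hqb]
        exact ih.tail ⟨e, he', hends⟩

/-- if `u ∈ supp X` can't reach `w` inside `X` but can in the whole graph, some
edge outside `X` has an endpoint in `supp X`. -/
lemma exists_exit {X : Finset G.E} {u w : G.V} (hu : u ∈ G.supp X)
    (hr : G.reachIn Finset.univ u w) (hnr : ¬ G.reachIn X u w) :
    ∃ f, f ∉ X ∧ ∃ a ∈ G.ends f, a ∈ G.supp X := by
  revert hnr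
  revert hu
  induction hr using Relation.ReflTransGen.head_induction_on with
  | refl => exact fun _ hnr => absurd Relation.ReflTransGen.refl hnr
  | @head x c h1 h2 ih =>
      intro hx hnr
      obtain ⟨e, he, hends⟩ := h1
      by_cases heX : e ∈ X
      · have hc : c ∈ G.supp X :=
          endpoint_mem_supp heX (by rw [hends]; exact Sym2.mem_mk_right _ _)
        have hnrc : ¬ G.reachIn X c w :=
          fun hr => hnr (Relation.ReflTransGen.head ⟨e, heX, hends⟩ hr)
        exact ih hc hnrc
      · exact ⟨e, heX, x, by rw [hends]; exact Sym2.mem_mk_left _ _, hx⟩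

lemma card_aux (X : Finset G.E) :
    G.deltaG - G.delta X =
      ((Finset.univ \ X).card : ℤ) - ((Finset.univ \ G.supp X).card : ℤ) := by
  unfold deltaG delta
  rw [Finset.card_sdiff_of_subset (Finset.subset_univ _), Finset.card_sdiff_of_subset (Finset.subset_univ _),
    Finset.card_univ, Finset.card_univ,
    Nat.cast_sub (Finset.card_le_univ _), Nat.cast_sub (Finset.card_le_univ _)]
  ring

lemma max_card_aux (hconn : G.GConn) :
    ∀ n (X : Finset G.E), X.Nonempty → (Finset.univ \ X).card ≤ n →
      (Finset.univ \ G.supp X).card ≤ (Finset.univ \ X).card := by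
  intro n
  induction n with
  | zero =>
      intro X hX hb
      by_cases hs : ∀ w : G.V, w ∈ G.supp X
      · have he : Finset.univ \ G.supp X = ∅ :=
          Finset.eq_empty_of_forall_notMem (fun w hw => (Finset.mem_sdiff.1 hw).2 (hs w))
        simp [he]
      · push_neg at hs; obtain ⟨w, hw⟩ := hs
        obtain ⟨u, hu⟩ := supp_nonempty hX
        have hnr : ¬ G.reachIn X u w := fun h => by
          rcases reach_eq_or_mem_supp h with h' | h'
          · exact hw (h' ▸ hu)
          · exact hw h'
        obtain ⟨f, hfX, a, haf, haX⟩ := exists_exit hu (hconn.2 u w) hnr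
        have : f ∈ Finset.univ \ X := by simp [hfX]
        have := Finset.card_pos.2 ⟨f, this⟩
        omega
  | succ n ih =>
      intro X hX hb
      by_cases hs : ∀ w : G.V, w ∈ G.supp X
      · have he : Finset.univ \ G.supp X = ∅ :=
          Finset.eq_empty_of_forall_notMem (fun w hw => (Finset.mem_sdiff.1 hw).2 (hs w))
        simp [he]
      · push_neg at hs; obtain ⟨w, hw⟩ := hs
        obtain ⟨u, hu⟩ := supp_nonempty hX
        have hnr : ¬ G.reachIn X u w := fun h => by
          rcases reach_eq_or_mem_supp h with h' | h'
          · exact hw (h' ▸ hu)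
          · exact hw h'
        obtain ⟨f, hfX, a, haf, haX⟩ := exists_exit hu (hconn.2 u w) hnr
        obtain ⟨b, hb'⟩ := Sym2.mem_iff_exists.1 haf
        set X' := insert f X with hX'def
        have hfin : f ∈ Finset.univ \ X := by simp [hfX]
        have hXX' : (Finset.univ \ X').card + 1 = (Finset.univ \ X).card := by
          have hseq : Finset.univ \ X' = (Finset.univ \ X).erase f := by
            ext e; simp [hX'def]; try tauto
          rw [hseq, Finset.card_erase_of_mem hfin]
          have := Finset.card_pos.2 ⟨f, hfin⟩
          omega
        have hsub : G.supp X' ⊆ insert b (G.supp X) := by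
          intro v hv
          obtain ⟨e, he, hve⟩ := mem_supp_iff.1 hv
          rcases Finset.mem_insert.1 he with he' | he'
          · subst he'
            rw [hb'] at hve
            rcases Sym2.mem_iff.1 hve with h' | h'
            · exact Finset.mem_insert_of_mem (h' ▸ haX)
            · exact h' ▸ Finset.mem_insert_self _ _
          · exact Finset.mem_insert_of_mem (endpoint_mem_supp he' hve)
        have h2 : (Finset.univ \ G.supp X).card ≤ (Finset.univ \ G.supp X').card + 1 := by
          have hss : Finset.univ \ G.supp X ⊆ insert b (Finset.univ \ G.supp X') := by
            intro v hv
            have hvns := (Finset.mem_sdiff.1 hv).2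
            by_cases hvX' : v ∈ G.supp X'
            · rcases Finset.mem_insert.1 (hsub hvX') with h' | h'
              · exact h' ▸ Finset.mem_insert_self _ _
              · exact absurd h' hvns
            · exact Finset.mem_insert_of_mem (by simp [hvX'])
          calc (Finset.univ \ G.supp X).card ≤ _ := Finset.card_le_card hss
            _ ≤ _ := Finset.card_insert_le _ _
        have hIH := ih X' ⟨f, Finset.mem_insert_self _ _⟩ (by omega)
        omega

lemma strict_card_aux (hconn : G.GConn) :
    ∀ n (X : Finset G.E), (Finset.univ \ X).card ≤ n →
      ∀ u v, u ∈ G.supp X → v ∈ G.supp X → ¬ G.reachIn X u v →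
      (Finset.univ \ G.supp X).card + 1 ≤ (Finset.univ \ X).card := by
  intro n
  induction n with
  | zero =>
      intro X hb u v hu hv hnr
      obtain ⟨f, hfX, a, haf, haX⟩ := exists_exit hu (hconn.2 u v) hnr
      have : f ∈ Finset.univ \ X := by simp [hfX]
      have := Finset.card_pos.2 ⟨f, this⟩
      omega
  | succ n ih =>
      intro X hb u v hu hv hnr
      obtain ⟨f, hfX, a, haf, haX⟩ := exists_exit hu (hconn.2 u v) hnr
      obtain ⟨b, hb'⟩ := Sym2.mem_iff_exists.1 haf
      set X' := insert f X with hX'def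
      have hXne : X.Nonempty := ⟨(mem_supp_iff.1 haX).choose, (mem_supp_iff.1 haX).choose_spec.1⟩
      have hfin : f ∈ Finset.univ \ X := by simp [hfX]
      have hXX' : (Finset.univ \ X').card + 1 = (Finset.univ \ X).card := by
        have hseq : Finset.univ \ X' = (Finset.univ \ X).erase f := by
          ext e; simp [hX'def]; try tauto
        rw [hseq, Finset.card_erase_of_mem hfin]
        have := Finset.card_pos.2 ⟨f, hfin⟩
        omega
      by_cases hbX : b ∈ G.supp X
      · -- both endpoints old: supp X' = supp X, strict jump via max lemma
        have hseq : G.supp X' = G.supp X := by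
          apply Finset.Subset.antisymm
          · intro w' hw'
            obtain ⟨e, he, hwe⟩ := mem_supp_iff.1 hw'
            rcases Finset.mem_insert.1 he with he' | he'
            · subst he'
              rw [hb'] at hwe
              rcases Sym2.mem_iff.1 hwe with h' | h'
              · exact h' ▸ haX
              · exact h' ▸ hbX
            · exact endpoint_mem_supp he' hwe
          · exact supp_mono (Finset.subset_insert _ _)
        have hmax := max_card_aux hconn n X' ⟨f, Finset.mem_insert_self _ _⟩ (by omega)
        rw [hseq] at hmax
        omega
      · -- fresh endpoint b
        have hub : u ≠ b := fun h => hbX (h ▸ hu)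
        have hvb : v ≠ b := fun h => hbX (h ▸ hv)
        have hnr' : ¬ G.reachIn X' u v := by
          intro hr
          have := reach_retract hb' hbX hr
          rw [if_neg hub, if_neg hvb] at this
          exact hnr this
        have hu' : u ∈ G.supp X' := supp_mono (Finset.subset_insert _ _) hu
        have hv' : v ∈ G.supp X' := supp_mono (Finset.subset_insert _ _) hv
        have hIH := ih X' (by omega) u v hu' hv' hnr'
        have hsub : G.supp X' ⊆ insert b (G.supp X) := by
          intro w' hw'
          obtain ⟨e, he, hwe⟩ := mem_supp_iff.1 hw'
          rcases Finset.mem_insert.1 he with he' | he'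
          · subst he'
            rw [hb'] at hwe
            rcases Sym2.mem_iff.1 hwe with h' | h'
            · exact Finset.mem_insert_of_mem (h' ▸ haX)
            · exact h' ▸ Finset.mem_insert_self _ _
          · exact Finset.mem_insert_of_mem (endpoint_mem_supp he' hwe)
        have h2 : (Finset.univ \ G.supp X).card ≤ (Finset.univ \ G.supp X').card + 1 := by
          have hss : Finset.univ \ G.supp X ⊆ insert b (Finset.univ \ G.supp X') := by
            intro w' hw'
            have hvns := (Finset.mem_sdiff.1 hw').2
            by_cases hvX' : w' ∈ G.supp X'
            · rcases Finset.mem_insert.1 (hsub hvX') with h' | h'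
              · exact h' ▸ Finset.mem_insert_self _ _
              · exact absurd h' hvns
            · exact Finset.mem_insert_of_mem (by simp [hvX'])
          calc (Finset.univ \ G.supp X).card ≤ _ := Finset.card_le_card hss
            _ ≤ _ := Finset.card_insert_le _ _
        omega

lemma delta_le_deltaG (hconn : G.GConn) {X : Finset G.E} (hX : X.Nonempty) :
    G.delta X ≤ G.deltaG := by
  have h := max_card_aux hconn (Finset.univ \ X).card X hX le_rfl
  have := card_aux (G := G) X
  omega

lemma delta_le_deltaG_strict (hconn : G.GConn) {X : Finset G.E} {u v : G.V}
    (hu : u ∈ G.supp X) (hv : v ∈ G.supp X) (hnr : ¬ G.reachIn X u v) :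
    G.delta X ≤ G.deltaG - 1 := by
  have h := strict_card_aux hconn (Finset.univ \ X).card X le_rfl u v hu hv hnr
  have := card_aux (G := G) X
  omega

lemma sum_ctb_univ (e : G.E) : ∑ v ∈ Finset.univ, G.ctb e v = 2 := by
  obtain ⟨⟨a, b⟩, hab⟩ := Quot.exists_rep (G.ends e)
  have hab' : G.ends e = s(a, b) := hab.symm
  simp_rw [ctb_eq hab']
  rw [Finset.sum_add_distrib]
  simp [Finset.sum_ite_eq']

lemma supp_univ_eq (hconn : G.GConn) (e0 : G.E) :
    G.supp (Finset.univ : Finset G.E) = Finset.univ := by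
  obtain ⟨u, hu⟩ := supp_nonempty (G := G) ⟨e0, Finset.mem_univ e0⟩
  apply Finset.eq_univ_of_forall
  intro v
  rcases reach_eq_or_mem_supp (hconn.2 u v) with h | h
  · exact h ▸ hu
  · exact h

lemma prune_aux {C : Finset G.E} (hC : ∀ v ∈ G.supp C, G.degIn C v = 2) :
    ∀ n (X : Finset G.E), X.card ≤ n → C ⊆ X →
      ∃ L, L ⊆ X ∧ C ⊆ L ∧ (∀ v ∈ G.supp L, G.degIn L v ≠ 1) ∧ G.delta X ≤ G.delta L := by
  intro n
  induction n with
  | zero =>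
      intro X hb hCX
      refine ⟨X, subset_rfl, hCX, fun v hv => ?_, le_rfl⟩
      obtain ⟨e, he, _⟩ := mem_supp_iff.1 hv
      have := Finset.card_pos.2 ⟨e, he⟩
      omega
  | succ n ih =>
      intro X hb hCX
      by_cases hlf : ∀ v ∈ G.supp X, G.degIn X v ≠ 1
      · exact ⟨X, subset_rfl, hCX, hlf, le_rfl⟩
      push_neg at hlf
      obtain ⟨v, hv, hdeg⟩ := hlf
      obtain ⟨e, he, hve⟩ := mem_supp_iff.1 hv
      have huniq : ∀ e' ∈ X, e' ≠ e → v ∉ G.ends e' := by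
        intro e' he' hne hve'
        have hpair : ({e', e} : Finset G.E) ⊆ X := by
          intro x hx
          rcases Finset.mem_insert.1 hx with rfl | hx
          · exact he'
          · rw [Finset.mem_singleton.1 hx]; exact he
        have hsum : G.degIn {e', e} v ≤ G.degIn X v := degIn_mono hpair v
        rw [degIn_eq_sum_ctb, Finset.sum_pair hne] at hsum
        have h1 := one_le_ctb hve
        have h2 := one_le_ctb hve'
        omega
      have heC : e ∉ C := by
        intro heC
        have h1 := hC v (endpoint_mem_supp heC hve)
        have h2 := degIn_mono hCX v
        omega
      set X' := X.erase e with hX'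
      have hCX' : C ⊆ X' := fun c hc => Finset.mem_erase.2 ⟨fun h => heC (h ▸ hc), hCX hc⟩
      have hsupp' : G.supp X' ⊆ (G.supp X).erase v := by
        intro w hw
        obtain ⟨e2, he2, hwe2⟩ := mem_supp_iff.1 hw
        have h2 := Finset.mem_erase.1 he2
        exact Finset.mem_erase.2
          ⟨fun hwv => huniq e2 h2.2 h2.1 (hwv ▸ hwe2), endpoint_mem_supp h2.2 hwe2⟩
      have hc1 : X'.card + 1 = X.card := by
        rw [hX', Finset.card_erase_of_mem he]
        have := Finset.card_pos.2 ⟨e, he⟩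
        omega
      have hc2 : (G.supp X').card + 1 ≤ (G.supp X).card := by
        have h3 := Finset.card_le_card hsupp'
        rw [Finset.card_erase_of_mem hv] at h3
        have := Finset.card_pos.2 ⟨v, hv⟩
        omega
      have hdel : G.delta X ≤ G.delta X' := by
        unfold Multigraph.delta
        omega
      obtain ⟨L, hL1, hL2, hL3, hL4⟩ := ih X' (by omega) hCX'
      exact ⟨L, hL1.trans (Finset.erase_subset _ _), hL2, hL3, hdel.trans hL4⟩

/-- key minimality lemma: any nonempty `X` with maximal `delta` contains every
leafless edge set. -/
lemma min_key (hconn : G.GConn) {X Y : Finset G.E} (hXne : X.Nonempty)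
    (hdX : G.delta X = G.deltaG) (hY : ∀ v ∈ G.supp Y, G.degIn Y v ≠ 1) :
    Y ⊆ X := by
  by_contra hns
  set W := Y \ X with hWdef
  have hWne : W.Nonempty := by rw [hWdef, Finset.sdiff_nonempty]; exact hns
  have hXY : X ∪ Y = X ∪ W := by ext x; simp [hWdef]; try tauto
  set N := G.supp (X ∪ Y) \ G.supp X with hNdef
  have hcu : (X ∪ Y).card = W.card + X.card := by
    rw [Finset.union_comm]
    exact (Finset.card_sdiff_add_card Y X).symm
  have hsuppsub : G.supp X ⊆ G.supp (X ∪ Y) := supp_mono Finset.subset_union_left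
  have hsu : N.card + (G.supp X).card = (G.supp (X ∪ Y)).card := by
    rw [hNdef]
    exact Finset.card_sdiff_add_card_eq_card hsuppsub
  have hNX : ∀ v ∈ N, v ∉ G.supp X := fun v hv => (Finset.mem_sdiff.1 hv).2
  have h2 : ∀ e ∈ X, ∑ v ∈ N, G.ctb e v = 0 := by
    intro e he
    refine Finset.sum_eq_zero (fun v hv => ?_)
    by_contra h0
    exact hNX v hv (endpoint_mem_supp he (mem_ends_of_ctb_ne_zero h0))
  have hS1 : ∑ v ∈ N, G.degIn (X ∪ Y) v = ∑ e ∈ W, ∑ v ∈ N, G.ctb e v := by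
    simp_rw [degIn_eq_sum_ctb]
    rw [Finset.sum_comm, hXY, Finset.sum_union Finset.disjoint_sdiff,
      Finset.sum_eq_zero h2, zero_add]
  have hub : ∀ e, ∑ v ∈ N, G.ctb e v ≤ 2 := fun e =>
    calc ∑ v ∈ N, G.ctb e v ≤ ∑ v ∈ Finset.univ, G.ctb e v :=
          Finset.sum_le_sum_of_subset (Finset.subset_univ N)
      _ = 2 := sum_ctb_univ e
  have hS2 : ∑ e ∈ W, ∑ v ∈ N, G.ctb e v ≤ 2 * W.card := by
    calc ∑ e ∈ W, ∑ v ∈ N, G.ctb e v ≤ ∑ _e ∈ W, 2 := Finset.sum_le_sum (fun e _ => hub e)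
      _ = 2 * W.card := by rw [Finset.sum_const, smul_eq_mul, mul_comm]
  have hvN2 : ∀ v ∈ N, 2 ≤ G.degIn (X ∪ Y) v := by
    intro v hv
    have hvXY : v ∈ G.supp (X ∪ Y) := (Finset.mem_sdiff.1 hv).1
    obtain ⟨e, he, hve⟩ := mem_supp_iff.1 hvXY
    have heY : e ∈ Y := by
      rcases Finset.mem_union.1 he with h | h
      · exact absurd (endpoint_mem_supp h hve) (hNX v hv)
      · exact h
    have hvY : v ∈ G.supp Y := endpoint_mem_supp heY hve
    have hne1 := hY v hvY
    have h1 := one_le_degIn hvY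
    have hmono := degIn_mono (Finset.subset_union_right : Y ⊆ X ∪ Y) v
    omega
  have hS3 : 2 * N.card ≤ ∑ v ∈ N, G.degIn (X ∪ Y) v := by
    calc 2 * N.card = ∑ _v ∈ N, 2 := by rw [Finset.sum_const, smul_eq_mul, mul_comm]
      _ ≤ _ := Finset.sum_le_sum hvN2
  have hXYne : (X ∪ Y).Nonempty := hXne.mono Finset.subset_union_left
  have hWN : W.card ≤ N.card := by
    have hle := delta_le_deltaG hconn hXYne
    rw [← hdX] at hle
    unfold Multigraph.delta at hle
    omega
  have hall : ∀ e ∈ W, ∑ v ∈ N, G.ctb e v = 2 := by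
    by_contra hna
    push_neg at hna
    obtain ⟨e0, he0, hne0⟩ := hna
    have hlt : ∑ e ∈ W, ∑ v ∈ N, G.ctb e v < ∑ _e ∈ W, 2 :=
      Finset.sum_lt_sum (fun i _ => hub i) ⟨e0, he0, lt_of_le_of_ne (hub e0) hne0⟩
    rw [Finset.sum_const, smul_eq_mul, mul_comm] at hlt
    omega
  have hsWN : G.supp W ⊆ N := by
    intro v hv
    obtain ⟨e, he, hve⟩ := mem_supp_iff.1 hv
    obtain ⟨⟨a, b⟩, hab⟩ := Quot.exists_rep (G.ends e)
    have hab' : G.ends e = s(a, b) := hab.symm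
    have hsum : ∑ v' ∈ N, G.ctb e v' =
        (if a ∈ N then 1 else 0) + (if b ∈ N then 1 else 0) := by
      simp_rw [ctb_eq hab']
      rw [Finset.sum_add_distrib]
      simp [Finset.sum_ite_eq']
    have h2e := hall e he
    rw [hsum] at h2e
    have haN : a ∈ N := by by_contra h; simp [h] at h2e; split at h2e <;> omega
    have hbN : b ∈ N := by by_contra h; simp [h] at h2e; split at h2e <;> omega
    rw [hab'] at hve
    rcases Sym2.mem_iff.1 hve with h | h
    · exact h ▸ haN
    · exact h ▸ hbN
  have hd : ∀ v, v ∈ G.supp X → v ∈ G.supp W → False :=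
    fun v h1 h2 => hNX v (hsWN h2) h1
  obtain ⟨u, hu⟩ := supp_nonempty hXne
  obtain ⟨v0, hv0⟩ := supp_nonempty hWne
  have hnr : ¬ G.reachIn (X ∪ W) u v0 := fun h => hd v0 (reach_stays hd hu h) hv0
  have hstrict := delta_le_deltaG_strict hconn
    (supp_mono (Finset.subset_union_left : X ⊆ X ∪ W) hu)
    (supp_mono (Finset.subset_union_right : W ⊆ X ∪ W) hv0) hnr
  rw [← hXY] at hstrict
  have hNW : N.card ≤ W.card := by
    rw [hS1] at hS3
    omega
  have hdXY : G.delta (X ∪ Y) = G.deltaG := by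
    rw [← hdX]
    unfold Multigraph.delta
    omega
  omega

end Multigraph

/-- For a connected graph `A` with a cycle, `Q_A = {X : A⟨X⟩ has no leaves}` has
a unique maximum `M`, which equals the minimum of
`R_A = {X ≠ ∅ : Δ(A⟨X⟩) = Δ(A)}`, and every cycle of `A` lies in `M`. -/
theorem stmt_11 (A : Multigraph) (hconn : A.GConn) (hcyc : ∃ C, A.IsCycleSet C) :
    ∃ M : Finset A.E,
      ((∀ v ∈ A.supp M, A.degIn M v ≠ 1) ∧
        ∀ X : Finset A.E, (∀ v ∈ A.supp X, A.degIn X v ≠ 1) → X ⊆ M) ∧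
      ((M.Nonempty ∧ A.delta M = A.deltaG) ∧
        ∀ X : Finset A.E, X.Nonempty → A.delta X = A.deltaG → M ⊆ X) ∧
      ∀ C : Finset A.E, A.IsCycleSet C → C ⊆ M := by
  classical
  open Multigraph in
  obtain ⟨C, hCy⟩ := hcyc
  have hCne : C.Nonempty := hCy.1.1
  have hCdeg : ∀ v ∈ A.supp C, A.degIn C v = 2 := hCy.2
  set Q := (Finset.univ : Finset A.E).powerset.filter
    (fun X => ∀ v ∈ A.supp X, A.degIn X v ≠ 1) with hQ
  set M := Q.sup id with hM
  have hmemQ : ∀ {X : Finset A.E}, (∀ v ∈ A.supp X, A.degIn X v ≠ 1) → X ∈ Q :=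
    fun {X} h => Finset.mem_filter.2 ⟨Finset.mem_powerset.2 (Finset.subset_univ X), h⟩
  have hsubM : ∀ X : Finset A.E, (∀ v ∈ A.supp X, A.degIn X v ≠ 1) → X ⊆ M :=
    fun X h => Finset.le_sup (f := id) (hmemQ h)
  have hMlf : ∀ v ∈ A.supp M, A.degIn M v ≠ 1 := by
    intro v hv
    obtain ⟨e, he, hve⟩ := Multigraph.mem_supp_iff.1 hv
    obtain ⟨X, hXQ, heX⟩ := Finset.mem_sup.1 he
    have hXlf := (Finset.mem_filter.1 hXQ).2
    have hvX : v ∈ A.supp X := Multigraph.endpoint_mem_supp heX hve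
    have h1 := Multigraph.one_le_degIn hvX
    have h2 := hXlf v hvX
    have h3 := Multigraph.degIn_mono (Finset.le_sup (f := id) hXQ : X ⊆ M) v
    simp only [id_eq] at h3
    rw [← hM] at h3
    omega
  have hClf : ∀ v ∈ A.supp C, A.degIn C v ≠ 1 := fun v hv => by rw [hCdeg v hv]; omega
  have hCM : C ⊆ M := hsubM C hClf
  have hMne : M.Nonempty := hCne.mono hCM
  have hsuppuniv := Multigraph.supp_univ_eq hconn hCne.choose
  have hdu : A.delta Finset.univ = A.deltaG := by
    unfold Multigraph.delta Multigraph.deltaG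
    rw [hsuppuniv]
    simp [Finset.card_univ]
  obtain ⟨L, hLsub, hCL, hLlf, hLdelta⟩ :=
    Multigraph.prune_aux hCdeg (Finset.univ : Finset A.E).card Finset.univ le_rfl
      (Finset.subset_univ C)
  have hLne : L.Nonempty := hCne.mono hCL
  have hLeq : A.delta L = A.deltaG :=
    le_antisymm (Multigraph.delta_le_deltaG hconn hLne) (hdu ▸ hLdelta)
  have hML : M ⊆ L := Multigraph.min_key hconn hLne hLeq hMlf
  have hLM : L ⊆ M := hsubM L hLlf
  have hMeq : A.delta M = A.deltaG := by
    have hML' : M = L := Finset.Subset.antisymm hML hLM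
    rw [hML']
    exact hLeq
  exact ⟨M, ⟨hMlf, hsubM⟩,
    ⟨⟨hMne, hMeq⟩, fun X hXne hXd => Multigraph.min_key hconn hXne hXd hMlf⟩,
    fun C' hC' => hsubM C' (fun v hv => by rw [hC'.2 v hv]; omega)⟩
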